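/- The integral identity ∫_0^{π/2} ( (cos θ)^{1/2} + (sin θ)^{1/2} )^{−4} dθ = 1/3 holds. Equivalently, for r(x) = (|x(1)|^{1/2} + |x(2)|^{1/2})², one has ∫_0^{2π} r(cos θ, sin θ)^{−2} dθ = 4/3. -/

import Mathlib

open Set Real

noncomputable section

private lemma Fa_deriv' {θ : ℝ} (hθ : θ ∈ Ioo (0:ℝ) (Real.pi/2)) :
    HasDerivAt (fun θ => -(Real.sqrt (Real.cos θ)) ^ 2 / (Real.sqrt (Real.cos θ) + Real.sqrt (Real.sin θ)) ^ 2
      + 2 / 3 * (Real.sqrt (Real.cos θ)) ^ 3 / (Real.sqrt (Real.cos θ) + Real.sqrt (Real.sin θ)) ^ 3)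
      ((Real.sqrt (Real.cos θ) + Real.sqrt (Real.sin θ)) ^ (-4 : ℝ)) θ := by
  have hc : 0 < Real.cos θ := Real.cos_pos_of_mem_Ioo ⟨by linarith [hθ.1, Real.pi_pos], hθ.2⟩
  have hs : 0 < Real.sin θ := Real.sin_pos_of_pos_of_lt_pi hθ.1 (by linarith [hθ.2, Real.pi_pos])
  set a := Real.sqrt (Real.cos θ) with ha_def
  set b := Real.sqrt (Real.sin θ) with hb_def
  have ha : 0 < a := Real.sqrt_pos.2 hc
  have hb : 0 < b := Real.sqrt_pos.2 hs
  have ha2 : a ^ 2 = Real.cos θ := Real.sq_sqrt hc.le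
  have hb2 : b ^ 2 = Real.sin θ := Real.sq_sqrt hs.le
  have hab : 0 < a + b := by positivity
  have hu : HasDerivAt (fun θ => Real.sqrt (Real.cos θ)) (-Real.sin θ / (2 * a)) θ :=
    (Real.hasDerivAt_cos θ).sqrt hc.ne'
  have hv : HasDerivAt (fun θ => Real.sqrt (Real.sin θ)) (Real.cos θ / (2 * b)) θ :=
    (Real.hasDerivAt_sin θ).sqrt hs.ne'
  have hsum : HasDerivAt (fun θ => Real.sqrt (Real.cos θ) + Real.sqrt (Real.sin θ))
      (-Real.sin θ / (2 * a) + Real.cos θ / (2 * b)) θ := hu.add hv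
  have h1 := HasDerivAt.div ((hu.pow 2).neg) (hsum.pow 2) (pow_ne_zero 2 hab.ne')
  have h2 := HasDerivAt.div ((hu.pow 3).const_mul (2/3 : ℝ)) (hsum.pow 3) (pow_ne_zero 3 hab.ne')
  have key := h1.add h2
  convert key using 1
  · rfl
  · rfl
  · rfl
  simp only [Pi.pow_apply, Pi.neg_apply, Pi.add_apply, Pi.div_apply, ← ha_def, ← hb_def]
  rw [show (-4 : ℝ) = ((-4 : ℤ) : ℝ) by norm_num, Real.rpow_intCast,
    zpow_neg, show ((4:ℤ)) = ((4:ℕ) : ℤ) by norm_num, zpow_natCast]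
  have h4 : a ^ 4 + b ^ 4 = 1 := by
    have := Real.sin_sq_add_cos_sq θ
    nlinarith [ha2, hb2]
  rw [← ha2, ← hb2]
  push_cast
  field_simp
  linear_combination (-b) * h4

private lemma s_pos' {θ : ℝ} (hθ : θ ∈ Icc (0:ℝ) (Real.pi/2)) :
    0 < Real.sqrt (Real.cos θ) + Real.sqrt (Real.sin θ) := by
  rcases lt_or_ge θ (Real.pi/2) with h | h
  · have h1 : 0 < Real.cos θ := Real.cos_pos_of_mem_Ioo ⟨by linarith [hθ.1, Real.pi_pos], h⟩
    have h2 := Real.sqrt_pos.2 h1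
    positivity
  · have hs : 0 < Real.sin θ := Real.sin_pos_of_pos_of_lt_pi (by linarith [Real.pi_pos, hθ.1])
      (by linarith [hθ.2, Real.pi_pos])
    have h2 := Real.sqrt_pos.2 hs
    positivity

private lemma part1' : (∫ θ in (0:ℝ)..(Real.pi/2),
    (Real.sqrt (Real.cos θ) + Real.sqrt (Real.sin θ)) ^ (-4 : ℝ)) = 1/3 := by
  have hab : (0:ℝ) ≤ Real.pi/2 := by positivity
  have hc : Continuous fun θ : ℝ => Real.sqrt (Real.cos θ) + Real.sqrt (Real.sin θ) :=
    (Real.continuous_sqrt.comp Real.continuous_cos).add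
      (Real.continuous_sqrt.comp Real.continuous_sin)
  have hcontF : ContinuousOn (fun θ => -(Real.sqrt (Real.cos θ)) ^ 2 /
      (Real.sqrt (Real.cos θ) + Real.sqrt (Real.sin θ)) ^ 2
      + 2 / 3 * (Real.sqrt (Real.cos θ)) ^ 3 / (Real.sqrt (Real.cos θ) + Real.sqrt (Real.sin θ)) ^ 3)
      (Icc (0:ℝ) (Real.pi/2)) := by
    apply ContinuousOn.add
    · exact ContinuousOn.div
        (((Real.continuous_sqrt.comp Real.continuous_cos).pow 2).neg.continuousOn)
        ((hc.pow 2).continuousOn) (fun x hx => pow_ne_zero 2 (s_pos' hx).ne')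
    · exact ContinuousOn.div
        ((continuous_const.mul ((Real.continuous_sqrt.comp Real.continuous_cos).pow 3)).continuousOn)
        ((hc.pow 3).continuousOn) (fun x hx => pow_ne_zero 3 (s_pos' hx).ne')
  have hint : IntervalIntegrable (fun θ => (Real.sqrt (Real.cos θ) + Real.sqrt (Real.sin θ)) ^ (-4 : ℝ))
      MeasureTheory.volume 0 (Real.pi/2) := by
    apply ContinuousOn.intervalIntegrable_of_Icc hab
    exact ContinuousOn.rpow_const hc.continuousOn (fun x hx => Or.inl (s_pos' hx).ne')
  rw [intervalIntegral.integral_eq_sub_of_hasDeriv_right_of_le hab hcontF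
    (fun x hx => (Fa_deriv' hx).hasDerivWithinAt) hint]
  norm_num [Real.cos_pi_div_two, Real.sin_pi_div_two, Real.sqrt_zero, Real.sqrt_one]

private lemma sabs_pos (θ : ℝ) : 0 < Real.sqrt |Real.cos θ| + Real.sqrt |Real.sin θ| := by
  rcases eq_or_ne (Real.cos θ) 0 with h | h
  · have hs : Real.sin θ ≠ 0 := by
      intro hs
      have h2 := Real.sin_sq_add_cos_sq θ
      rw [h, hs] at h2; norm_num at h2
    have h2 : 0 < Real.sqrt |Real.sin θ| := Real.sqrt_pos.2 (abs_pos.2 hs)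
    positivity
  · have h2 : 0 < Real.sqrt |Real.cos θ| := Real.sqrt_pos.2 (abs_pos.2 h)
    positivity

private lemma part2' : (∫ θ in (0:ℝ)..(2 * Real.pi),
    ((Real.sqrt |Real.cos θ| + Real.sqrt |Real.sin θ|) ^ 2) ^ (-2 : ℝ)) = 4/3 := by
  set g : ℝ → ℝ := fun θ => ((Real.sqrt |Real.cos θ| + Real.sqrt |Real.sin θ|) ^ 2) ^ (-2 : ℝ) with hg
  have hgcont : Continuous g := by
    apply Continuous.rpow_const
    · exact (((Real.continuous_sqrt.comp (Real.continuous_cos.abs)).add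
        (Real.continuous_sqrt.comp (Real.continuous_sin.abs))).pow 2)
    · intro x
      exact Or.inl (pow_ne_zero 2 (sabs_pos x).ne')
  have hper : Function.Periodic g (Real.pi/2) := by
    intro x
    simp only [hg, Real.cos_add_pi_div_two, Real.sin_add_pi_div_two, abs_neg]
    ring_nf
  have hint : ∀ t₁ t₂ : ℝ, IntervalIntegrable g MeasureTheory.volume t₁ t₂ :=
    fun t₁ t₂ => hgcont.intervalIntegrable t₁ t₂
  have h4 := hper.intervalIntegral_add_zsmul_eq 4 0 hint
  have he : (0:ℝ) + (4:ℤ) • (Real.pi/2) = 2 * Real.pi := by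
    rw [zsmul_eq_mul]; push_cast; ring
  have he2 : (0:ℝ) + Real.pi/2 = Real.pi/2 := by ring
  rw [he, he2] at h4
  rw [h4]
  have hquarter : (∫ θ in (0:ℝ)..(Real.pi/2), g θ) = 1/3 := by
    rw [← part1']
    apply intervalIntegral.integral_congr
    intro θ hθ
    rw [uIcc_of_le (by positivity)] at hθ
    have hc : 0 ≤ Real.cos θ := Real.cos_nonneg_of_mem_Icc ⟨by linarith [hθ.1, Real.pi_pos], hθ.2⟩
    have hs : 0 ≤ Real.sin θ := Real.sin_nonneg_of_mem_Icc ⟨hθ.1, by linarith [hθ.2, Real.pi_pos]⟩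
    have hbase : 0 ≤ Real.sqrt (Real.cos θ) + Real.sqrt (Real.sin θ) := by positivity
    simp only [hg, abs_of_nonneg hc, abs_of_nonneg hs]
    rw [← Real.rpow_natCast (Real.sqrt (Real.cos θ) + Real.sqrt (Real.sin θ)) 2,
      ← Real.rpow_mul hbase]
    norm_num
  rw [hquarter]
  norm_num

/-- `∫_0^{π/2} (√(cos θ) + √(sin θ))^{-4} dθ = 1/3`; equivalently, for the
`l_{1/2}`-gauge `r(x) = (√|x₁| + √|x₂|)²`, `∫_0^{2π} r(cos θ, sin θ)^{-2} dθ = 4/3`. -/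
theorem l_half_sphere_integral :
    ((∫ θ in (0 : ℝ)..(Real.pi / 2),
        (Real.sqrt (Real.cos θ) + Real.sqrt (Real.sin θ)) ^ (-4 : ℝ)) = 1 / 3)
      ∧ ∀ r : ℝ × ℝ → ℝ,
          (∀ x : ℝ × ℝ, r x = (Real.sqrt |x.1| + Real.sqrt |x.2|) ^ 2) →
          (∫ θ in (0 : ℝ)..(2 * Real.pi),
            r (Real.cos θ, Real.sin θ) ^ (-2 : ℝ)) = 4 / 3 := by
  refine ⟨part1', fun r hr => ?_⟩
  simp only [hr]
  exact part2'
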